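/- Let O := ℤ₅[X]/(X²−5) be the ring obtained by adjoining a square root of 5 to the ring ℤ₅ of 5-adic integers, and let π : O → F₅ be the ring homomorphism induced by reduction modulo 5 on ℤ₅ together with sending the class of X to 0. Then there exists a group homomorphism ρ₀ : SL_2(F₅) → GL_2(O) such that for every M ∈ SL_2(F₅) and all indices i,j one has π(ρ₀(M)(i,j)) = M(i,j). In other words, ρ₀ is a lift to O = ℤ₅[√5] of the inclusion SL_2(F₅) ⊆ GL_2(F₅). -/

import Mathlib

open Matrix

instance : Fact (Nat.Prime 5) := ⟨by norm_num⟩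

/-- The ring `O = ℤ₅[√5] = ℤ₅[X]/(X² − 5)`. -/
noncomputable abbrev Z5sqrt5 : Type :=
  AdjoinRoot (Polynomial.X ^ 2 - 5 : Polynomial ℤ_[5])

/-- The reduction `π : ℤ₅[√5] → F₅`, induced by reduction mod 5 on `ℤ₅` and sending
the class of `X` to `0`. -/
noncomputable def Z5sqrt5.toZMod : Z5sqrt5 →+* ZMod 5 :=
  AdjoinRoot.lift PadicInt.toZMod (0 : ZMod 5) (by
    simp [Polynomial.eval₂_sub, Polynomial.eval₂_pow]
    decide)

namespace SLLift

structure Rg where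
  a : ℤ
  b : ℤ
  c : ℤ
  d : ℤ
deriving DecidableEq

def Rg.mul (x y : Rg) : Rg :=
  ⟨x.a*y.a - x.b*y.b + 5*(x.c*y.c - x.d*y.d),
   x.a*y.b + x.b*y.a + 5*(x.c*y.d + x.d*y.c),
   x.a*y.c + x.c*y.a - x.b*y.d - x.d*y.b,
   x.a*y.d + x.d*y.a + x.b*y.c + x.c*y.b⟩

def Rg.add (x y : Rg) : Rg := ⟨x.a+y.a, x.b+y.b, x.c+y.c, x.d+y.d⟩
def Rg.sm4 (x : Rg) : Rg := ⟨4*x.a, 4*x.b, 4*x.c, 4*x.d⟩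

abbrev M2 := Rg × Rg × Rg × Rg

def mul2 (m n : M2) : M2 :=
  ((m.1.mul n.1).add (m.2.1.mul n.2.2.1),
   (m.1.mul n.2.1).add (m.2.1.mul n.2.2.2),
   (m.2.2.1.mul n.1).add (m.2.2.2.mul n.2.2.1),
   (m.2.2.1.mul n.2.1).add (m.2.2.2.mul n.2.2.2))

def sm4M (m : M2) : M2 := (m.1.sm4, m.2.1.sm4, m.2.2.1.sm4, m.2.2.2.sm4)

abbrev K5 := ZMod 5 × ZMod 5 × ZMod 5 × ZMod 5

def kmul (x y : K5) : K5 :=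
  (x.1*y.1 + x.2.1*y.2.2.1, x.1*y.2.1 + x.2.1*y.2.2.2,
   x.2.2.1*y.1 + x.2.2.2*y.2.2.1, x.2.2.1*y.2.1 + x.2.2.2*y.2.2.2)

def enc (x : K5) : Nat := x.1.val*125 + x.2.1.val*25 + x.2.2.1.val*5 + x.2.2.2.val

def dec (n : Nat) : K5 := (((n/125) % 5 : Nat), ((n/25) % 5 : Nat), ((n/5) % 5 : Nat), (n % 5 : Nat))

def pairs : List (Nat × M2) :=
  [(45, Rg.mk 0 0 0 0, Rg.mk 4 0 0 0, Rg.mk (-4) 0 0 0, Rg.mk 0 0 0 0),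
   (46, Rg.mk 2 (-1) 0 (-1), Rg.mk (-1) 0 1 0, Rg.mk 1 0 (-1) 0, Rg.mk 2 1 0 1),
   (47, Rg.mk (-1) (-2) 1 0, Rg.mk (-1) 0 (-1) 0, Rg.mk 1 0 1 0, Rg.mk (-1) 2 1 0),
   (48, Rg.mk 1 2 (-1) 0, Rg.mk (-1) 0 (-1) 0, Rg.mk 1 0 1 0, Rg.mk 1 (-2) (-1) 0),
   (49, Rg.mk (-2) 1 0 1, Rg.mk (-1) 0 1 0, Rg.mk 1 0 (-1) 0, Rg.mk (-2) (-1) 0 (-1)),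
   (60, Rg.mk 0 0 0 0, Rg.mk 0 4 0 0, Rg.mk 0 4 0 0, Rg.mk 0 0 0 0),
   (61, Rg.mk 2 (-1) 0 1, Rg.mk 0 (-1) 0 (-1), Rg.mk 0 (-1) 0 (-1), Rg.mk 2 1 0 (-1)),
   (62, Rg.mk (-1) (-2) (-1) 0, Rg.mk 0 (-1) 0 1, Rg.mk 0 (-1) 0 1, Rg.mk (-1) 2 (-1) 0),
   (63, Rg.mk 1 2 1 0, Rg.mk 0 (-1) 0 1, Rg.mk 0 (-1) 0 1, Rg.mk 1 (-2) 1 0),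
   (64, Rg.mk (-2) 1 0 (-1), Rg.mk 0 (-1) 0 (-1), Rg.mk 0 (-1) 0 (-1), Rg.mk (-2) (-1) 0 1),
   (90, Rg.mk 0 0 0 0, Rg.mk 0 (-4) 0 0, Rg.mk 0 (-4) 0 0, Rg.mk 0 0 0 0),
   (91, Rg.mk 2 (-1) 0 1, Rg.mk 0 1 0 1, Rg.mk 0 1 0 1, Rg.mk 2 1 0 (-1)),
   (92, Rg.mk (-1) (-2) (-1) 0, Rg.mk 0 1 0 (-1), Rg.mk 0 1 0 (-1), Rg.mk (-1) 2 (-1) 0),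
   (93, Rg.mk 1 2 1 0, Rg.mk 0 1 0 (-1), Rg.mk 0 1 0 (-1), Rg.mk 1 (-2) 1 0),
   (94, Rg.mk (-2) 1 0 (-1), Rg.mk 0 1 0 1, Rg.mk 0 1 0 1, Rg.mk (-2) (-1) 0 1),
   (105, Rg.mk 0 0 0 0, Rg.mk (-4) 0 0 0, Rg.mk 4 0 0 0, Rg.mk 0 0 0 0),
   (106, Rg.mk 2 (-1) 0 (-1), Rg.mk 1 0 (-1) 0, Rg.mk (-1) 0 1 0, Rg.mk 2 1 0 1),
   (107, Rg.mk (-1) (-2) 1 0, Rg.mk 1 0 1 0, Rg.mk (-1) 0 (-1) 0, Rg.mk (-1) 2 1 0),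
   (108, Rg.mk 1 2 (-1) 0, Rg.mk 1 0 1 0, Rg.mk (-1) 0 (-1) 0, Rg.mk 1 (-2) (-1) 0),
   (109, Rg.mk (-2) 1 0 1, Rg.mk 1 0 (-1) 0, Rg.mk (-1) 0 1 0, Rg.mk (-2) (-1) 0 (-1)),
   (126, Rg.mk 4 0 0 0, Rg.mk 0 0 0 0, Rg.mk 0 0 0 0, Rg.mk 4 0 0 0),
   (131, Rg.mk (-1) 0 1 0, Rg.mk (-2) 1 0 1, Rg.mk 2 1 0 1, Rg.mk (-1) 0 1 0),
   (136, Rg.mk (-1) 0 (-1) 0, Rg.mk 1 2 (-1) 0, Rg.mk (-1) 2 1 0, Rg.mk (-1) 0 (-1) 0),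
   (141, Rg.mk (-1) 0 (-1) 0, Rg.mk (-1) (-2) 1 0, Rg.mk 1 (-2) (-1) 0, Rg.mk (-1) 0 (-1) 0),
   (146, Rg.mk (-1) 0 1 0, Rg.mk 2 (-1) 0 (-1), Rg.mk (-2) (-1) 0 (-1), Rg.mk (-1) 0 1 0),
   (151, Rg.mk (-1) 0 1 0, Rg.mk 2 1 0 1, Rg.mk (-2) 1 0 1, Rg.mk (-1) 0 1 0),
   (157, Rg.mk 1 (-1) (-1) (-1), Rg.mk 0 2 0 0, Rg.mk 0 2 0 0, Rg.mk 1 1 (-1) 1),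
   (163, Rg.mk (-2) (-2) 0 0, Rg.mk (-2) (-2) 0 0, Rg.mk 2 (-2) 0 0, Rg.mk (-2) 2 0 0),
   (169, Rg.mk 0 2 0 0, Rg.mk 1 (-1) (-1) (-1), Rg.mk (-1) (-1) 1 (-1), Rg.mk 0 (-2) 0 0),
   (170, Rg.mk 2 1 0 1, Rg.mk (-1) 0 1 0, Rg.mk 1 0 (-1) 0, Rg.mk 2 (-1) 0 (-1)),
   (176, Rg.mk (-1) 0 (-1) 0, Rg.mk (-1) 2 1 0, Rg.mk 1 2 (-1) 0, Rg.mk (-1) 0 (-1) 0),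
   (183, Rg.mk (-2) (-2) 0 0, Rg.mk 2 (-2) 0 0, Rg.mk (-2) (-2) 0 0, Rg.mk (-2) 2 0 0),
   (185, Rg.mk 2 1 0 (-1), Rg.mk 0 (-1) 0 (-1), Rg.mk 0 (-1) 0 (-1), Rg.mk 2 (-1) 0 1),
   (192, Rg.mk 1 (-1) 1 1, Rg.mk (-2) 0 0 0, Rg.mk 2 0 0 0, Rg.mk 1 1 1 (-1)),
   (199, Rg.mk 0 2 0 0, Rg.mk 1 1 (-1) 1, Rg.mk (-1) 1 1 1, Rg.mk 0 (-2) 0 0),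
   (201, Rg.mk (-1) 0 (-1) 0, Rg.mk 1 (-2) (-1) 0, Rg.mk (-1) (-2) 1 0, Rg.mk (-1) 0 (-1) 0),
   (209, Rg.mk 0 2 0 0, Rg.mk (-1) (-1) 1 (-1), Rg.mk 1 (-1) (-1) (-1), Rg.mk 0 (-2) 0 0),
   (212, Rg.mk 1 (-1) 1 1, Rg.mk 2 0 0 0, Rg.mk (-2) 0 0 0, Rg.mk 1 1 1 (-1)),
   (215, Rg.mk 2 1 0 (-1), Rg.mk 0 1 0 1, Rg.mk 0 1 0 1, Rg.mk 2 (-1) 0 1),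
   (223, Rg.mk (-2) (-2) 0 0, Rg.mk (-2) 2 0 0, Rg.mk 2 2 0 0, Rg.mk (-2) 2 0 0),
   (226, Rg.mk (-1) 0 1 0, Rg.mk (-2) (-1) 0 (-1), Rg.mk 2 (-1) 0 (-1), Rg.mk (-1) 0 1 0),
   (230, Rg.mk 2 1 0 1, Rg.mk 1 0 (-1) 0, Rg.mk (-1) 0 1 0, Rg.mk 2 (-1) 0 (-1)),
   (239, Rg.mk 0 2 0 0, Rg.mk (-1) 1 1 1, Rg.mk 1 1 (-1) 1, Rg.mk 0 (-2) 0 0),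
   (243, Rg.mk (-2) (-2) 0 0, Rg.mk 2 2 0 0, Rg.mk (-2) 2 0 0, Rg.mk (-2) 2 0 0),
   (247, Rg.mk 1 (-1) (-1) (-1), Rg.mk 0 (-2) 0 0, Rg.mk 0 (-2) 0 0, Rg.mk 1 1 (-1) 1),
   (253, Rg.mk 0 4 0 0, Rg.mk 0 0 0 0, Rg.mk 0 0 0 0, Rg.mk 0 (-4) 0 0),
   (258, Rg.mk 0 (-1) 0 (-1), Rg.mk (-2) 1 0 (-1), Rg.mk 2 1 0 (-1), Rg.mk 0 1 0 1),
   (263, Rg.mk 0 (-1) 0 1, Rg.mk 1 2 1 0, Rg.mk (-1) 2 (-1) 0, Rg.mk 0 1 0 (-1)),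
   (268, Rg.mk 0 (-1) 0 1, Rg.mk (-1) (-2) (-1) 0, Rg.mk 1 (-2) 1 0, Rg.mk 0 1 0 (-1)),
   (273, Rg.mk 0 (-1) 0 (-1), Rg.mk 2 (-1) 0 1, Rg.mk (-2) (-1) 0 1, Rg.mk 0 1 0 1),
   (278, Rg.mk 0 (-1) 0 (-1), Rg.mk 2 1 0 (-1), Rg.mk (-2) 1 0 (-1), Rg.mk 0 1 0 1),
   (281, Rg.mk 1 1 (-1) 1, Rg.mk 0 2 0 0, Rg.mk 0 2 0 0, Rg.mk 1 (-1) (-1) (-1)),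
   (289, Rg.mk 2 (-2) 0 0, Rg.mk (-2) (-2) 0 0, Rg.mk 2 (-2) 0 0, Rg.mk 2 2 0 0),
   (292, Rg.mk (-2) 0 0 0, Rg.mk 1 (-1) 1 1, Rg.mk (-1) (-1) (-1) 1, Rg.mk (-2) 0 0 0),
   (295, Rg.mk (-1) 2 1 0, Rg.mk (-1) 0 (-1) 0, Rg.mk 1 0 1 0, Rg.mk (-1) (-2) 1 0),
   (303, Rg.mk 0 (-1) 0 1, Rg.mk (-1) 2 (-1) 0, Rg.mk 1 2 1 0, Rg.mk 0 1 0 (-1)),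
   (309, Rg.mk 2 (-2) 0 0, Rg.mk 2 (-2) 0 0, Rg.mk (-2) (-2) 0 0, Rg.mk 2 2 0 0),
   (310, Rg.mk (-1) 2 (-1) 0, Rg.mk 0 (-1) 0 1, Rg.mk 0 (-1) 0 1, Rg.mk (-1) (-2) (-1) 0),
   (316, Rg.mk 1 1 1 (-1), Rg.mk (-2) 0 0 0, Rg.mk 2 0 0 0, Rg.mk 1 (-1) 1 1),
   (322, Rg.mk (-2) 0 0 0, Rg.mk 1 1 1 (-1), Rg.mk (-1) 1 (-1) (-1), Rg.mk (-2) 0 0 0),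
   (328, Rg.mk 0 (-1) 0 1, Rg.mk 1 (-2) 1 0, Rg.mk (-1) (-2) (-1) 0, Rg.mk 0 1 0 (-1)),
   (332, Rg.mk (-2) 0 0 0, Rg.mk (-1) (-1) (-1) 1, Rg.mk 1 (-1) 1 1, Rg.mk (-2) 0 0 0),
   (336, Rg.mk 1 1 1 (-1), Rg.mk 2 0 0 0, Rg.mk (-2) 0 0 0, Rg.mk 1 (-1) 1 1),
   (340, Rg.mk (-1) 2 (-1) 0, Rg.mk 0 1 0 (-1), Rg.mk 0 1 0 (-1), Rg.mk (-1) (-2) (-1) 0),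
   (349, Rg.mk 2 (-2) 0 0, Rg.mk (-2) 2 0 0, Rg.mk 2 2 0 0, Rg.mk 2 2 0 0),
   (353, Rg.mk 0 (-1) 0 (-1), Rg.mk (-2) (-1) 0 1, Rg.mk 2 (-1) 0 1, Rg.mk 0 1 0 1),
   (355, Rg.mk (-1) 2 1 0, Rg.mk 1 0 1 0, Rg.mk (-1) 0 (-1) 0, Rg.mk (-1) (-2) 1 0),
   (362, Rg.mk (-2) 0 0 0, Rg.mk (-1) 1 (-1) (-1), Rg.mk 1 1 1 (-1), Rg.mk (-2) 0 0 0),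
   (369, Rg.mk 2 (-2) 0 0, Rg.mk 2 2 0 0, Rg.mk (-2) 2 0 0, Rg.mk 2 2 0 0),
   (371, Rg.mk 1 1 (-1) 1, Rg.mk 0 (-2) 0 0, Rg.mk 0 (-2) 0 0, Rg.mk 1 (-1) (-1) (-1)),
   (377, Rg.mk 0 (-4) 0 0, Rg.mk 0 0 0 0, Rg.mk 0 0 0 0, Rg.mk 0 4 0 0),
   (382, Rg.mk 0 1 0 1, Rg.mk (-2) 1 0 (-1), Rg.mk 2 1 0 (-1), Rg.mk 0 (-1) 0 (-1)),
   (387, Rg.mk 0 1 0 (-1), Rg.mk 1 2 1 0, Rg.mk (-1) 2 (-1) 0, Rg.mk 0 (-1) 0 1),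
   (392, Rg.mk 0 1 0 (-1), Rg.mk (-1) (-2) (-1) 0, Rg.mk 1 (-2) 1 0, Rg.mk 0 (-1) 0 1),
   (397, Rg.mk 0 1 0 1, Rg.mk 2 (-1) 0 1, Rg.mk (-2) (-1) 0 1, Rg.mk 0 (-1) 0 (-1)),
   (402, Rg.mk 0 1 0 1, Rg.mk 2 1 0 (-1), Rg.mk (-2) 1 0 (-1), Rg.mk 0 (-1) 0 (-1)),
   (409, Rg.mk (-1) (-1) 1 (-1), Rg.mk 0 2 0 0, Rg.mk 0 2 0 0, Rg.mk (-1) 1 1 1),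
   (411, Rg.mk (-2) 2 0 0, Rg.mk (-2) (-2) 0 0, Rg.mk 2 (-2) 0 0, Rg.mk (-2) (-2) 0 0),
   (418, Rg.mk 2 0 0 0, Rg.mk 1 (-1) 1 1, Rg.mk (-1) (-1) (-1) 1, Rg.mk 2 0 0 0),
   (420, Rg.mk 1 (-2) (-1) 0, Rg.mk (-1) 0 (-1) 0, Rg.mk 1 0 1 0, Rg.mk 1 2 (-1) 0),
   (427, Rg.mk 0 1 0 (-1), Rg.mk (-1) 2 (-1) 0, Rg.mk 1 2 1 0, Rg.mk 0 (-1) 0 1),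
   (431, Rg.mk (-2) 2 0 0, Rg.mk 2 (-2) 0 0, Rg.mk (-2) (-2) 0 0, Rg.mk (-2) (-2) 0 0),
   (435, Rg.mk 1 (-2) 1 0, Rg.mk 0 (-1) 0 1, Rg.mk 0 (-1) 0 1, Rg.mk 1 2 1 0),
   (444, Rg.mk (-1) (-1) (-1) 1, Rg.mk (-2) 0 0 0, Rg.mk 2 0 0 0, Rg.mk (-1) 1 (-1) (-1)),
   (448, Rg.mk 2 0 0 0, Rg.mk 1 1 1 (-1), Rg.mk (-1) 1 (-1) (-1), Rg.mk 2 0 0 0),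
   (452, Rg.mk 0 1 0 (-1), Rg.mk 1 (-2) 1 0, Rg.mk (-1) (-2) (-1) 0, Rg.mk 0 (-1) 0 1),
   (458, Rg.mk 2 0 0 0, Rg.mk (-1) (-1) (-1) 1, Rg.mk 1 (-1) 1 1, Rg.mk 2 0 0 0),
   (464, Rg.mk (-1) (-1) (-1) 1, Rg.mk 2 0 0 0, Rg.mk (-2) 0 0 0, Rg.mk (-1) 1 (-1) (-1)),
   (465, Rg.mk 1 (-2) 1 0, Rg.mk 0 1 0 (-1), Rg.mk 0 1 0 (-1), Rg.mk 1 2 1 0),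
   (471, Rg.mk (-2) 2 0 0, Rg.mk (-2) 2 0 0, Rg.mk 2 2 0 0, Rg.mk (-2) (-2) 0 0),
   (477, Rg.mk 0 1 0 1, Rg.mk (-2) (-1) 0 1, Rg.mk 2 (-1) 0 1, Rg.mk 0 (-1) 0 (-1)),
   (480, Rg.mk 1 (-2) (-1) 0, Rg.mk 1 0 1 0, Rg.mk (-1) 0 (-1) 0, Rg.mk 1 2 (-1) 0),
   (488, Rg.mk 2 0 0 0, Rg.mk (-1) 1 (-1) (-1), Rg.mk 1 1 1 (-1), Rg.mk 2 0 0 0),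
   (491, Rg.mk (-2) 2 0 0, Rg.mk 2 2 0 0, Rg.mk (-2) 2 0 0, Rg.mk (-2) (-2) 0 0),
   (499, Rg.mk (-1) (-1) 1 (-1), Rg.mk 0 (-2) 0 0, Rg.mk 0 (-2) 0 0, Rg.mk (-1) 1 1 1),
   (504, Rg.mk (-4) 0 0 0, Rg.mk 0 0 0 0, Rg.mk 0 0 0 0, Rg.mk (-4) 0 0 0),
   (509, Rg.mk 1 0 (-1) 0, Rg.mk (-2) 1 0 1, Rg.mk 2 1 0 1, Rg.mk 1 0 (-1) 0),
   (514, Rg.mk 1 0 1 0, Rg.mk 1 2 (-1) 0, Rg.mk (-1) 2 1 0, Rg.mk 1 0 1 0),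
   (519, Rg.mk 1 0 1 0, Rg.mk (-1) (-2) 1 0, Rg.mk 1 (-2) (-1) 0, Rg.mk 1 0 1 0),
   (524, Rg.mk 1 0 (-1) 0, Rg.mk 2 (-1) 0 (-1), Rg.mk (-2) (-1) 0 (-1), Rg.mk 1 0 (-1) 0),
   (529, Rg.mk 1 0 (-1) 0, Rg.mk 2 1 0 1, Rg.mk (-2) 1 0 1, Rg.mk 1 0 (-1) 0),
   (533, Rg.mk (-1) 1 1 1, Rg.mk 0 2 0 0, Rg.mk 0 2 0 0, Rg.mk (-1) (-1) 1 (-1)),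
   (537, Rg.mk 2 2 0 0, Rg.mk (-2) (-2) 0 0, Rg.mk 2 (-2) 0 0, Rg.mk 2 (-2) 0 0),
   (541, Rg.mk 0 (-2) 0 0, Rg.mk 1 (-1) (-1) (-1), Rg.mk (-1) (-1) 1 (-1), Rg.mk 0 2 0 0),
   (545, Rg.mk (-2) (-1) 0 (-1), Rg.mk (-1) 0 1 0, Rg.mk 1 0 (-1) 0, Rg.mk (-2) 1 0 1),
   (554, Rg.mk 1 0 1 0, Rg.mk (-1) 2 1 0, Rg.mk 1 2 (-1) 0, Rg.mk 1 0 1 0),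
   (557, Rg.mk 2 2 0 0, Rg.mk 2 (-2) 0 0, Rg.mk (-2) (-2) 0 0, Rg.mk 2 (-2) 0 0),
   (560, Rg.mk (-2) (-1) 0 1, Rg.mk 0 (-1) 0 (-1), Rg.mk 0 (-1) 0 (-1), Rg.mk (-2) 1 0 (-1)),
   (568, Rg.mk (-1) 1 (-1) (-1), Rg.mk (-2) 0 0 0, Rg.mk 2 0 0 0, Rg.mk (-1) (-1) (-1) 1),
   (571, Rg.mk 0 (-2) 0 0, Rg.mk 1 1 (-1) 1, Rg.mk (-1) 1 1 1, Rg.mk 0 2 0 0),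
   (579, Rg.mk 1 0 1 0, Rg.mk 1 (-2) (-1) 0, Rg.mk (-1) (-2) 1 0, Rg.mk 1 0 1 0),
   (581, Rg.mk 0 (-2) 0 0, Rg.mk (-1) (-1) 1 (-1), Rg.mk 1 (-1) (-1) (-1), Rg.mk 0 2 0 0),
   (588, Rg.mk (-1) 1 (-1) (-1), Rg.mk 2 0 0 0, Rg.mk (-2) 0 0 0, Rg.mk (-1) (-1) (-1) 1),
   (590, Rg.mk (-2) (-1) 0 1, Rg.mk 0 1 0 1, Rg.mk 0 1 0 1, Rg.mk (-2) 1 0 (-1)),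
   (597, Rg.mk 2 2 0 0, Rg.mk (-2) 2 0 0, Rg.mk 2 2 0 0, Rg.mk 2 (-2) 0 0),
   (604, Rg.mk 1 0 (-1) 0, Rg.mk (-2) (-1) 0 (-1), Rg.mk 2 (-1) 0 (-1), Rg.mk 1 0 (-1) 0),
   (605, Rg.mk (-2) (-1) 0 (-1), Rg.mk 1 0 (-1) 0, Rg.mk (-1) 0 1 0, Rg.mk (-2) 1 0 1),
   (611, Rg.mk 0 (-2) 0 0, Rg.mk (-1) 1 1 1, Rg.mk 1 1 (-1) 1, Rg.mk 0 2 0 0),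
   (617, Rg.mk 2 2 0 0, Rg.mk 2 2 0 0, Rg.mk (-2) 2 0 0, Rg.mk 2 (-2) 0 0),
   (623, Rg.mk (-1) 1 1 1, Rg.mk 0 (-2) 0 0, Rg.mk 0 (-2) 0 0, Rg.mk (-1) (-1) 1 (-1))]
def keysN : List Nat :=
  [45, 46, 47, 48, 49, 60, 61, 62, 63, 64, 90, 91, 92, 93, 94, 105, 106, 107, 108, 109, 126, 131, 136, 141, 146, 151, 157, 163, 169, 170, 176, 183, 185, 192, 199, 201, 209, 212, 215, 223, 226, 230, 239, 243, 247, 253, 258, 263, 268, 273, 278, 281, 289, 292, 295, 303, 309, 310, 316, 322, 328, 332, 336, 340, 349, 353, 355, 362, 369, 371, 377, 382, 387, 392, 397, 402, 409, 411, 418, 420, 427, 431, 435, 444, 448, 452, 458, 464, 465, 471, 477, 480, 488, 491, 499, 504, 509, 514, 519, 524, 529, 533, 537, 541, 545, 554, 557, 560, 568, 571, 579, 581, 588, 590, 597, 604, 605, 611, 617, 623]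
def wdTbl : List (Nat × Nat × Nat) :=
  [(45, 1, 0), (46, 5, 1), (47, 4, 1), (48, 3, 1), (49, 2, 1), (60, 10, 1), (61, 8, 1), (62, 11, 0), (63, 9, 1), (64, 7, 0), (90, 9, 1), (91, 9, 0), (92, 8, 1), (93, 10, 0), (94, 7, 0), (105, 3, 0), (106, 4, 1), (107, 5, 1), (108, 6, 1), (109, 4, 0), (126, 0, 0), (131, 5, 1), (136, 6, 1), (141, 6, 0), (146, 5, 0), (151, 1, 1), (157, 6, 1), (163, 7, 1), (169, 7, 1), (170, 5, 0), (176, 2, 1), (183, 7, 1), (185, 8, 1), (192, 8, 1), (199, 6, 1), (201, 3, 1), (209, 5, 0), (212, 9, 1), (215, 9, 1), (223, 7, 1), (226, 4, 1), (230, 4, 0), (239, 5, 0), (243, 7, 0), (247, 6, 0), (253, 10, 0), (258, 8, 1), (263, 10, 1), (268, 9, 1), (273, 6, 1), (278, 9, 1), (281, 6, 1), (289, 8, 1), (292, 7, 1), (295, 4, 0), (303, 9, 0), (309, 6, 0), (310, 11, 1), (316, 8, 0), (322, 7, 1), (328, 10, 1), (332, 7, 1), (336, 9, 1), (340, 8,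 1), (349, 5, 1), (353, 8, 0), (355, 5, 0), (362, 7, 0), (369, 6, 0), (371, 6, 0), (377, 10, 1), (382, 8, 1), (387, 10, 1), (392, 9, 1), (397, 6, 1), (402, 9, 0), (409, 7, 0), (411, 7, 1), (418, 9, 0), (420, 3, 0), (427, 9, 1), (431, 7, 1), (435, 9, 1), (444, 8, 1), (448, 5, 1), (452, 10, 0), (458, 9, 1), (464, 6, 0), (465, 10, 1), (471, 7, 1), (477, 8, 0), (480, 6, 0), (488, 8, 1), (491, 7, 0), (499, 4, 1), (504, 2, 0), (509, 3, 0), (514, 4, 0), (519, 5, 0), (524, 3, 1), (529, 6, 1), (533, 7, 1), (537, 8, 1), (541, 7, 0), (545, 2, 0), (554, 5, 1), (557, 6, 1), (560, 7, 1), (568, 8, 1), (571, 6, 1), (579, 4, 1), (581, 5, 1), (588, 6, 1), (590, 7, 1), (597, 5, 1), (604, 3, 1), (605, 4, 1), (611, 5, 1), (617, 6, 1), (623, 4, 1)]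

def oneM : M2 := (Rg.mk 4 0 0 0, Rg.mk 0 0 0 0, Rg.mk 0 0 0 0, Rg.mk 4 0 0 0)

def tbl (x : K5) : M2 := (pairs.lookup (enc x)).getD oneM

def redR (t : Rg) : ZMod 5 := ((t.a + 2*t.b : ℤ) : ZMod 5)

def Sk : K5 := dec 45
def Tk : K5 := dec 151
def Sik : K5 := dec 105
def Tik : K5 := dec 226

def gk : Nat → K5 | 0 => Sk | _ => Tk
def gik : Nat → K5 | 0 => Sik | _ => Tik

def wd (n : Nat) : Nat × Nat := ((wdTbl.lookup n).getD (0,0))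

set_option maxRecDepth 10000 in
theorem chk_dec_enc : ∀ x : K5, dec (enc x) = x := by decide

set_option maxRecDepth 100000 in
theorem chk_one : tbl (1,0,0,1) = oneM := by decide

set_option maxRecDepth 100000 in
theorem chk_mem : ∀ a b c d : ZMod 5, a*d - b*c = 1 → enc (a,b,c,d) ∈ keysN := by decide

set_option maxRecDepth 1000000 in
theorem chk_red : ∀ n ∈ keysN,
    redR (tbl (dec n)).1 = 4*(dec n).1 ∧ redR (tbl (dec n)).2.1 = 4*(dec n).2.1 ∧
    redR (tbl (dec n)).2.2.1 = 4*(dec n).2.2.1 ∧ redR (tbl (dec n)).2.2.2 = 4*(dec n).2.2.2 := by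
  decide

set_option maxRecDepth 1000000 in
theorem chk_genS : ∀ n ∈ keysN,
    mul2 (tbl (dec n)) (tbl Sk) = sm4M (tbl (kmul (dec n) Sk)) := by decide

set_option maxRecDepth 1000000 in
theorem chk_genT : ∀ n ∈ keysN,
    mul2 (tbl (dec n)) (tbl Tk) = sm4M (tbl (kmul (dec n) Tk)) := by decide

set_option maxRecDepth 1000000 in
theorem chk_wd : ∀ n ∈ keysN, n = 126 ∨
    (enc (kmul (dec n) (gik (wd n).2)) ∈ keysN ∧
     (wd (enc (kmul (dec n) (gik (wd n).2)))).1 < (wd n).1) := by decide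

/-! ### The 5-adic side -/

theorem exists_sqrt_neg_one : ∃ z : ℤ_[5], z ^ 2 = -1 ∧ PadicInt.toZMod z = 2 := by
  have h1 : (Polynomial.X^2+1 : Polynomial ℤ_[5]).eval 2 = 5 := by norm_num
  have h2 : (Polynomial.X^2+1 : Polynomial ℤ_[5]).derivative.eval 2 = 4 := by
    simp [Polynomial.derivative_X_pow]
    norm_num
  have hn4 : ‖(4 : ℤ_[5])‖ = 1 := by
    apply le_antisymm (PadicInt.norm_le_one _)
    by_contra hlt
    push_neg at hlt
    have : ‖((4 : ℤ) : ℤ_[5])‖ < 1 := by push_cast; exact hlt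
    rw [PadicInt.norm_int_lt_one_iff_dvd] at this
    norm_num at this
  have hn5 : ‖(5 : ℤ_[5])‖ < 1 := by
    have : ‖((5:ℕ) : ℤ_[5])‖ = ((5:ℕ) : ℝ)⁻¹ := PadicInt.norm_p
    push_cast at this
    rw [this]
    norm_num
  have hyp : ‖(Polynomial.X^2+1 : Polynomial ℤ_[5]).eval 2‖ <
      ‖(Polynomial.X^2+1 : Polynomial ℤ_[5]).derivative.eval 2‖^2 := by
    rw [h1, h2, hn4]
    simpa using hn5
  obtain ⟨z, hz, hdist, -, -⟩ := hensels_lemma hyp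
  refine ⟨z, ?_, ?_⟩
  · have hz' := hz
    simp [Polynomial.eval_add, Polynomial.eval_pow] at hz'
    linear_combination hz'
  · rw [Polynomial.coe_aeval_eq_eval, h2, hn4] at hdist
    have hdvd : ((5:ℕ) : ℤ_[5]) ∣ (z - 2) := (PadicInt.norm_lt_one_iff_dvd _).mp hdist
    obtain ⟨w, hw⟩ := hdvd
    have h0 : PadicInt.toZMod (z - 2) = 0 := by
      rw [hw, _root_.map_mul, map_natCast]
      have h50 : ((5:ℕ) : ZMod 5) = 0 := by decide
      rw [h50, zero_mul]
    rw [map_sub, sub_eq_zero] at h0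
    rw [h0]
    exact map_ofNat _ 2

theorem exists_inv4 : ∃ w : ℤ_[5], 4 * w = 1 := by
  have hn4 : ‖(4 : ℤ_[5])‖ = 1 := by
    apply le_antisymm (PadicInt.norm_le_one _)
    by_contra hlt
    push_neg at hlt
    have : ‖((4 : ℤ) : ℤ_[5])‖ < 1 := by push_cast; exact hlt
    rw [PadicInt.norm_int_lt_one_iff_dvd] at this
    norm_num at this
  exact (PadicInt.isUnit_iff.mpr hn4).exists_right_inv

noncomputable def zi : ℤ_[5] := exists_sqrt_neg_one.choose
theorem zi_sq : zi ^ 2 = -1 := exists_sqrt_neg_one.choose_spec.1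
theorem zi_red : PadicInt.toZMod zi = 2 := exists_sqrt_neg_one.choose_spec.2

noncomputable def w4 : ℤ_[5] := exists_inv4.choose
theorem w4_spec : 4 * w4 = 1 := exists_inv4.choose_spec

noncomputable def ι : Z5sqrt5 := AdjoinRoot.of _ zi
noncomputable def rt : Z5sqrt5 := AdjoinRoot.root _
noncomputable def uu : Z5sqrt5 := AdjoinRoot.of _ w4

theorem ι_sq : ι ^ 2 = -1 := by
  rw [ι, ← map_pow, zi_sq, map_neg, _root_.map_one]

theorem rt_sq : rt ^ 2 = 5 := by
  have h : (AdjoinRoot.mk (Polynomial.X ^ 2 - 5 : Polynomial ℤ_[5]))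
      (Polynomial.X ^ 2 - 5) = 0 := AdjoinRoot.mk_self
  rw [map_sub, map_pow, AdjoinRoot.mk_X] at h
  have h5 : (AdjoinRoot.mk (Polynomial.X ^ 2 - 5 : Polynomial ℤ_[5]))
      (5 : Polynomial ℤ_[5]) = 5 := map_ofNat _ 5
  rw [h5, sub_eq_zero] at h
  exact h

theorem hu4 : (4 : Z5sqrt5) * uu = 1 := by
  have h := congrArg (AdjoinRoot.of (Polynomial.X ^ 2 - 5 : Polynomial ℤ_[5])) w4_spec
  rw [_root_.map_mul, _root_.map_one, map_ofNat] at h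
  exact h

theorem π_ι : Z5sqrt5.toZMod ι = 2 := by
  rw [Z5sqrt5.toZMod, ι, AdjoinRoot.lift_of, zi_red]

theorem π_rt : Z5sqrt5.toZMod rt = 0 := by
  rw [Z5sqrt5.toZMod, rt, AdjoinRoot.lift_root]

theorem π_uu : Z5sqrt5.toZMod uu = 4 := by
  have h := congrArg Z5sqrt5.toZMod hu4
  rw [_root_.map_mul, _root_.map_one] at h
  have h4 : Z5sqrt5.toZMod (4 : Z5sqrt5) = 4 := map_ofNat _ 4
  rw [h4] at h
  have e : ((4:ZMod 5) * 4) = 1 := by decide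
  calc Z5sqrt5.toZMod uu = ((4:ZMod 5)*4) * Z5sqrt5.toZMod uu := by rw [e, one_mul]
    _ = 4 * (4 * Z5sqrt5.toZMod uu) := by ring
    _ = 4 * 1 := by rw [h]
    _ = 4 := by norm_num

noncomputable def hR (t : Rg) : Z5sqrt5 :=
  (t.a : Z5sqrt5) + (t.b : Z5sqrt5) * ι + (t.c : Z5sqrt5) * rt + (t.d : Z5sqrt5) * (ι * rt)

theorem hR_mul (x y : Rg) : hR (x.mul y) = hR x * hR y := by
  simp only [hR, Rg.mul]
  push_cast
  linear_combination (-((x.b:Z5sqrt5)*y.b + ((x.b:Z5sqrt5)*y.d + (x.d:Z5sqrt5)*y.b)*rt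
      + (x.d:Z5sqrt5)*y.d*rt^2)) * ι_sq
    + (-((x.c:Z5sqrt5)*y.c + ((x.c:Z5sqrt5)*y.d + (x.d:Z5sqrt5)*y.c)*ι
      - (x.d:Z5sqrt5)*y.d)) * rt_sq

theorem hR_add (x y : Rg) : hR (x.add y) = hR x + hR y := by
  simp only [hR, Rg.add]
  push_cast
  ring

theorem hR_sm4 (x : Rg) : hR x.sm4 = 4 * hR x := by
  simp only [hR, Rg.sm4]
  push_cast
  ring

theorem π_hR (t : Rg) : Z5sqrt5.toZMod (hR t) = redR t := by
  simp only [hR, redR, map_add, _root_.map_mul, map_intCast, π_ι, π_rt]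
  push_cast
  ring

/-! ### The lifted representation -/

abbrev SL2F5 := SpecialLinearGroup (Fin 2) (ZMod 5)

def tupl (M : SL2F5) : K5 :=
  ((M : Matrix (Fin 2) (Fin 2) (ZMod 5)) 0 0, (M : Matrix (Fin 2) (Fin 2) (ZMod 5)) 0 1,
   (M : Matrix (Fin 2) (Fin 2) (ZMod 5)) 1 0, (M : Matrix (Fin 2) (Fin 2) (ZMod 5)) 1 1)

theorem tupl_mul (M N : SL2F5) : tupl (M * N) = kmul (tupl M) (tupl N) := by
  simp [tupl, kmul, Matrix.SpecialLinearGroup.coe_mul, Matrix.mul_apply, Fin.sum_univ_two]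

theorem tupl_mem (M : SL2F5) : enc (tupl M) ∈ keysN := by
  apply chk_mem
  have h := M.2
  rw [Matrix.det_fin_two] at h
  exact h

theorem eq_of_tupl {M N : SL2F5} (h : tupl M = tupl N) : M = N := by
  simp only [tupl, Prod.mk.injEq] at h
  apply Subtype.ext
  ext i j
  fin_cases i <;> fin_cases j <;> simp [h.1, h.2.1, h.2.2.1, h.2.2.2]

noncomputable def gmat (M : SL2F5) : Matrix (Fin 2) (Fin 2) Z5sqrt5 :=
  !![uu * hR (tbl (tupl M)).1, uu * hR (tbl (tupl M)).2.1;
     uu * hR (tbl (tupl M)).2.2.1, uu * hR (tbl (tupl M)).2.2.2]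

theorem entry_step (p q r s t : Rg) (hpq : (p.mul r).add (q.mul s) = t.sm4) :
    (uu * hR p) * (uu * hR r) + (uu * hR q) * (uu * hR s) = uu * hR t := by
  have e1 : hR p * hR r + hR q * hR s = 4 * hR t := by
    have h := congrArg hR hpq
    rwa [hR_add, hR_mul, hR_mul, hR_sm4] at h
  linear_combination uu^2 * e1 + uu * hR t * hu4

theorem gmat_mul_of_key {M N : SL2F5}
    (hk : mul2 (tbl (tupl M)) (tbl (tupl N)) = sm4M (tbl (kmul (tupl M) (tupl N)))) :
    gmat (M * N) = gmat M * gmat N := by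
  simp only [mul2, sm4M, Prod.mk.injEq] at hk
  obtain ⟨h1, h2, h3, h4⟩ := hk
  unfold gmat
  rw [Matrix.mul_fin_two, tupl_mul]
  rw [entry_step _ _ _ _ _ h1, entry_step _ _ _ _ _ h2,
      entry_step _ _ _ _ _ h3, entry_step _ _ _ _ _ h4]

theorem gmat_one : gmat 1 = 1 := by
  have ht : tupl (1 : SL2F5) = (1,0,0,1) := by
    simp [tupl, Matrix.SpecialLinearGroup.coe_one, Matrix.one_apply]
  have h40 : hR (Rg.mk 4 0 0 0) = 4 := by simp [hR]
  have h00 : hR (Rg.mk 0 0 0 0) = 0 := by simp [hR]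
  rw [gmat, ht, chk_one]
  show !![uu * hR (Rg.mk 4 0 0 0), uu * hR (Rg.mk 0 0 0 0);
          uu * hR (Rg.mk 0 0 0 0), uu * hR (Rg.mk 4 0 0 0)] = 1
  have hu' : uu * (4 : Z5sqrt5) = 1 := by rw [mul_comm]; exact hu4
  simp [h40, h00, hu', Matrix.one_fin_two]

def Ssl : SL2F5 := ⟨!![0,1;-1,0], by simp [Matrix.det_fin_two_of]⟩
def Tsl : SL2F5 := ⟨!![1,1;0,1], by simp [Matrix.det_fin_two_of]⟩
def Sisl : SL2F5 := ⟨!![0,-1;1,0], by simp [Matrix.det_fin_two_of]⟩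
def Tisl : SL2F5 := ⟨!![1,-1;0,1], by simp [Matrix.det_fin_two_of]⟩

def gsl : Nat → SL2F5 | 0 => Ssl | _ => Tsl
def gisl : Nat → SL2F5 | 0 => Sisl | _ => Tisl

theorem gisl_mul_gsl (f : Nat) : gisl f * gsl f = 1 := by
  cases f with
  | zero => exact eq_of_tupl (by decide : tupl (Sisl * Ssl) = tupl 1)
  | succ n => exact eq_of_tupl (by decide : tupl (Tisl * Tsl) = tupl 1)

theorem tupl_gsl (f : Nat) : tupl (gsl f) = gk f := by
  cases f with
  | zero => exact (by decide : tupl Ssl = Sk)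
  | succ n => exact (by decide : tupl Tsl = Tk)

theorem tupl_gisl (f : Nat) : tupl (gisl f) = gik f := by
  cases f with
  | zero => exact (by decide : tupl Sisl = Sik)
  | succ n => exact (by decide : tupl Tisl = Tik)

theorem gen_step (f : Nat) (N : SL2F5) : gmat (N * gsl f) = gmat N * gmat (gsl f) := by
  apply gmat_mul_of_key
  rw [tupl_gsl]
  have hmem := tupl_mem N
  have hde := chk_dec_enc (tupl N)
  cases f with
  | zero =>
    have := chk_genS (enc (tupl N)) hmem
    rwa [hde] at this
  | succ m =>
    have := chk_genT (enc (tupl N)) hmem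
    rwa [hde] at this

theorem main_ind : ∀ d : ℕ, ∀ M : SL2F5, (wd (enc (tupl M))).1 ≤ d →
    ∀ N, gmat (N * M) = gmat N * gmat M := by
  intro d
  induction d with
  | zero =>
    intro M hle N
    rcases chk_wd (enc (tupl M)) (tupl_mem M) with h126 | ⟨-, hlt⟩
    · have hM : M = 1 := by
        apply eq_of_tupl
        have := congrArg dec h126
        rw [chk_dec_enc] at this
        rw [this]
        decide
      rw [hM, mul_one, gmat_one, mul_one]
    · exact absurd (Nat.lt_of_lt_of_le hlt hle) (Nat.not_lt_zero _)
  | succ d ih =>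
    intro M hle N
    rcases chk_wd (enc (tupl M)) (tupl_mem M) with h126 | ⟨hpmem, hlt⟩
    · have hM : M = 1 := by
        apply eq_of_tupl
        have := congrArg dec h126
        rw [chk_dec_enc] at this
        rw [this]
        decide
      rw [hM, mul_one, gmat_one, mul_one]
    · have heq : enc (tupl (M * gisl (wd (enc (tupl M))).2)) =
          enc (kmul (dec (enc (tupl M))) (gik (wd (enc (tupl M))).2)) := by
        rw [tupl_mul, tupl_gisl, chk_dec_enc]
      have hdP : (wd (enc (tupl (M * gisl (wd (enc (tupl M))).2)))).1 ≤ d := by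
        rw [heq]
        omega
      have hPQ := ih (M * gisl (wd (enc (tupl M))).2) hdP
      have hMPG : M = (M * gisl (wd (enc (tupl M))).2) * gsl (wd (enc (tupl M))).2 := by
        rw [mul_assoc, gisl_mul_gsl, mul_one]
      rw [hMPG, ← mul_assoc, gen_step, hPQ, gen_step, mul_assoc]

theorem gmat_mul (M N : SL2F5) : gmat (M * N) = gmat M * gmat N :=
  main_ind (wd (enc (tupl N))).1 N le_rfl M

end SLLift

open SLLift in
/-- The inclusion `SL_2(F₅) ⊆ GL_2(F₅)` lifts to `O = ℤ₅[√5]`. -/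
theorem sl2_F5_lifts_to_Z5sqrt5 :
    ∃ ρ₀ : SpecialLinearGroup (Fin 2) (ZMod 5) →* GL (Fin 2) Z5sqrt5,
      ∀ (M : SpecialLinearGroup (Fin 2) (ZMod 5)) (i j : Fin 2),
        Z5sqrt5.toZMod ((ρ₀ M : Matrix (Fin 2) (Fin 2) Z5sqrt5) i j) =
          (M : Matrix (Fin 2) (Fin 2) (ZMod 5)) i j := by
  have hval : ∀ M : SL2F5, gmat M * gmat M⁻¹ = 1 := by
    intro M
    rw [← gmat_mul]
    have h1 : M * M⁻¹ = 1 := by group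
    rw [h1, gmat_one]
  have hinv : ∀ M : SL2F5, gmat M⁻¹ * gmat M = 1 := by
    intro M
    rw [← gmat_mul]
    have h1 : M⁻¹ * M = 1 := by group
    rw [h1, gmat_one]
  refine ⟨{ toFun := fun M => ⟨gmat M, gmat M⁻¹, hval M, hinv M⟩,
            map_one' := Units.ext (by simpa using gmat_one),
            map_mul' := fun M N => Units.ext (by simpa using gmat_mul M N) }, ?_⟩
  intro M i j
  have hred := chk_red (enc (tupl M)) (tupl_mem M)
  rw [chk_dec_enc] at hred
  obtain ⟨r1, r2, r3, r4⟩ := hred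
  have haux : ∀ x : ZMod 5, (4:ZMod 5) * (4 * x) = x := by decide
  show Z5sqrt5.toZMod (gmat M i j) = _
  fin_cases i <;> fin_cases j
  · show Z5sqrt5.toZMod (uu * hR (tbl (tupl M)).1) = _
    rw [_root_.map_mul, π_uu, π_hR, r1]
    exact haux _
  · show Z5sqrt5.toZMod (uu * hR (tbl (tupl M)).2.1) = _
    rw [_root_.map_mul, π_uu, π_hR, r2]
    exact haux _
  · show Z5sqrt5.toZMod (uu * hR (tbl (tupl M)).2.2.1) = _
    rw [_root_.map_mul, π_uu, π_hR, r3]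
    exact haux _
  · show Z5sqrt5.toZMod (uu * hR (tbl (tupl M)).2.2.2) = _
    rw [_root_.map_mul, π_uu, π_hR, r4]
    exact haux _
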